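/- Let G be a finite simple graph on n vertices in which no two distinct vertices have equal closed neighborhoods, and let H be its closed neighborhood hypergraph. Then for every integer j with 0 ≤ j ≤ γ^ID(G), one has n ≤ δ̌(H)·(γ^ID(G) − j) + T[H,j]; equivalently, γ^ID(G) ≥ (n − T[H,j])/δ̌(H) + j. -/

import Mathlib

open Finset

variable {V : Type*}

/-- Degree of a vertex `x` in a hypergraph with edge set `F`:
the number of edges containing `x`. -/
def hdeg [DecidableEq V] (F : Finset (Finset V)) (x : V) : ℕ :=
  (F.filter fun e => x ∈ e).card

/-- Minimum degree over the vertex set `S` of a hypergraph with edge set `F`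
(`0` if `S` is empty). -/
def hminDeg [DecidableEq V] (F : Finset (Finset V)) (S : Finset V) : ℕ :=
  if h : S.Nonempty then S.inf' h (hdeg F) else 0

/-- Edge set of the restriction `H[S]`: the distinct traces `e ∩ S` of edges. -/
def hrestrict [DecidableEq V] (E : Finset (Finset V)) (S : Finset V) : Finset (Finset V) :=
  E.image fun e => e ∩ S

/-- Edge set of the pseudo induced subhypergraph on `S`: edges contained in `S`. -/
def hpseudo [DecidableEq V] (E : Finset (Finset V)) (S : Finset V) : Finset (Finset V) :=
  E.filter fun e => e ⊆ S

/-- Degeneracy of the hypergraph with vertex set `W` and edge set `E`: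
the largest minimum degree of an induced subhypergraph. -/
def degenOn [DecidableEq V] (E : Finset (Finset V)) (W : Finset V) : ℕ :=
  W.powerset.sup fun S => hminDeg (hrestrict E S) S

/-- Pseudo degeneracy of the hypergraph with vertex set `W` and edge set `E`. -/
def pdegenOn [DecidableEq V] (E : Finset (Finset V)) (W : Finset V) : ℕ :=
  W.powerset.sup fun S => hminDeg (hpseudo E S) S

/-- Reduced degeneracy of the hypergraph with vertex set `W` and edge set `E`:
the largest pseudo degeneracy of an induced subhypergraph. -/
def rdegenOn [DecidableEq V] (E : Finset (Finset V)) (W : Finset V) : ℕ :=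
  W.powerset.sup fun S => pdegenOn (hrestrict E S) S

def degen [DecidableEq V] [Fintype V] (E : Finset (Finset V)) : ℕ := degenOn E univ
def pdegen [DecidableEq V] [Fintype V] (E : Finset (Finset V)) : ℕ := pdegenOn E univ
def rdegen [DecidableEq V] [Fintype V] (E : Finset (Finset V)) : ℕ := rdegenOn E univ

/-- The distinct nonempty traces of the edges `E` on the set `S`. -/
def ntraces [DecidableEq V] (E : Finset (Finset V)) (S : Finset V) : Finset (Finset V) :=
  (hrestrict E S).erase ∅

/-- The trace function `T[H,k]`: the largest number of distinct nonempty traces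
of `E` on a `k`-element vertex subset. -/
def traceFn [DecidableEq V] [Fintype V] (E : Finset (Finset V)) (k : ℕ) : ℕ :=
  (univ.powerset.filter fun S : Finset V => S.card = k).sup fun S => (ntraces E S).card

/-- The edge set of the closed neighborhood hypergraph of a graph `G`:
the distinct closed neighborhoods `N[x]`. -/
def closedNH [DecidableEq V] [Fintype V] (G : SimpleGraph V) [DecidableRel G.Adj] :
    Finset (Finset V) :=
  univ.image fun x => insert x (G.neighborFinset x)

/-- The edge set of the open neighborhood hypergraph of a graph `G`:
the distinct open neighborhoods `N(x)`. -/
def openNH [DecidableEq V] [Fintype V] (G : SimpleGraph V) [DecidableRel G.Adj] :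
    Finset (Finset V) :=
  univ.image fun x => G.neighborFinset x

/-- `D` is an identifying code of `G`: it is dominating, and distinct vertices
have distinct closed neighborhood traces on `D`. -/
def IsIdCode [DecidableEq V] [Fintype V] (G : SimpleGraph V) [DecidableRel G.Adj]
    (D : Finset V) : Prop :=
  (∀ x : V, ((insert x (G.neighborFinset x)) ∩ D).Nonempty) ∧
  ∀ x y : V, x ≠ y →
    (insert x (G.neighborFinset x)) ∩ D ≠ (insert y (G.neighborFinset y)) ∩ D

/-- The identifying code number `γ^ID(G)`. -/
noncomputable def gammaID [DecidableEq V] [Fintype V] (G : SimpleGraph V)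
    [DecidableRel G.Adj] : ℕ :=
  sInf {k | ∃ D : Finset V, IsIdCode G D ∧ D.card = k}

lemma traceFn_step [DecidableEq V] [Fintype V] (E : Finset (Finset V)) (k : ℕ) :
    traceFn E (k + 1) ≤ traceFn E k + rdegen E := by
  unfold traceFn
  apply Finset.sup_le
  intro S hS
  simp only [mem_filter, mem_powerset] at hS
  obtain ⟨-, hcard⟩ := hS
  have hSne : S.Nonempty := card_pos.mp (by omega)
  have hpd : hminDeg (hrestrict E S) S ≤ rdegen E := by
    have h1 : pdegenOn (hrestrict E S) S ≤ rdegen E := by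
      unfold rdegen rdegenOn
      exact Finset.le_sup (f := fun T => pdegenOn (hrestrict E T) T)
        (mem_powerset.mpr (subset_univ S))
    refine le_trans ?_ h1
    have heq : hpseudo (hrestrict E S) S = hrestrict E S := by
      apply filter_true_of_mem
      intro t ht
      obtain ⟨e, -, rfl⟩ := mem_image.mp ht
      exact inter_subset_right
    have h2 : hminDeg (hpseudo (hrestrict E S) S) S ≤ pdegenOn (hrestrict E S) S := by
      unfold pdegenOn
      exact Finset.le_sup (f := fun A => hminDeg (hpseudo (hrestrict E S) A) A)
        (mem_powerset.mpr le_rfl)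
    rw [heq] at h2
    exact h2
  rw [hminDeg, dif_pos hSne] at hpd
  obtain ⟨v, hvS, hv⟩ := Finset.exists_mem_eq_inf' hSne (hdeg (hrestrict E S))
  rw [hv] at hpd
  have hsplit : ((ntraces E S).filter fun t => v ∈ t).card +
      ((ntraces E S).filter fun t => ¬ v ∈ t).card = (ntraces E S).card :=
    card_filter_add_card_filter_not _
  have h2 : ((ntraces E S).filter fun t => v ∈ t).card ≤ hdeg (hrestrict E S) v := by
    apply card_le_card
    exact filter_subset_filter _ (erase_subset _ _)
  have h3 : ((ntraces E S).filter fun t => ¬ v ∈ t) ⊆ ntraces E (S.erase v) := by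
    intro t ht
    simp only [mem_filter, ntraces, mem_erase, hrestrict, mem_image] at ht ⊢
    obtain ⟨⟨hne, e, he, rfl⟩, hvt⟩ := ht
    refine ⟨hne, e, he, ?_⟩
    ext a
    simp only [mem_inter, mem_erase]
    constructor
    · rintro ⟨ha, -, hb⟩; exact ⟨ha, hb⟩
    · rintro ⟨ha, hb⟩
      refine ⟨ha, ?_, hb⟩
      rintro rfl
      exact hvt (mem_inter.mpr ⟨ha, hb⟩)
  have h3' : ((ntraces E S).filter fun t => ¬ v ∈ t).card ≤
      (ntraces E (S.erase v)).card := card_le_card h3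
  have h4 : (ntraces E (S.erase v)).card ≤
      (univ.powerset.filter fun T : Finset V => T.card = k).sup
        fun T => (ntraces E T).card := by
    exact Finset.le_sup (f := fun T => (ntraces E T).card)
      (by simp only [mem_filter, mem_powerset]
          exact ⟨subset_univ _, by rw [card_erase_of_mem hvS]; omega⟩)
  omega

lemma traceFn_le_add [DecidableEq V] [Fintype V] (E : Finset (Finset V)) (j d : ℕ) :
    traceFn E (j + d) ≤ traceFn E j + rdegen E * d := by
  induction d with
  | zero => simp
  | succ d ih =>
    calc traceFn E (j + (d + 1)) = traceFn E ((j + d) + 1) := by rw [← add_assoc]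
      _ ≤ traceFn E (j + d) + rdegen E := traceFn_step E (j + d)
      _ ≤ (traceFn E j + rdegen E * d) + rdegen E := Nat.add_le_add_right ih _
      _ = traceFn E j + rdegen E * (d + 1) := by ring

/-- if no two distinct vertices of the `n`-vertex graph `G` have equal
closed neighborhoods and `H` is the closed neighborhood hypergraph of `G`, then for
every `0 ≤ j ≤ γ^ID(G)` one has `n ≤ δ̌(H)·(γ^ID(G) − j) + T[H,j]`, i.e.
`γ^ID(G) ≥ (n − T[H,j])/δ̌(H) + j`. -/
theorem stmt11 [DecidableEq V] [Fintype V] (G : SimpleGraph V) [DecidableRel G.Adj]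
    (hdist : ∀ x y : V,
      insert x (G.neighborFinset x) = insert y (G.neighborFinset y) → x = y) :
    ∀ j : ℕ, j ≤ gammaID G →
      Fintype.card V ≤
        rdegen (closedNH G) * (gammaID G - j) + traceFn (closedNH G) j := by
  intro j hj
  have hne : {k | ∃ D : Finset V, IsIdCode G D ∧ D.card = k}.Nonempty := by
    refine ⟨(univ : Finset V).card, univ, ⟨?_, ?_⟩, rfl⟩
    · intro x
      exact ⟨x, mem_inter.mpr ⟨mem_insert_self _ _, mem_univ x⟩⟩
    · intro x y hxy h
      rw [inter_univ, inter_univ] at h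
      exact hxy (hdist x y h)
  obtain ⟨D, hD, hcard⟩ := Nat.sInf_mem hne
  have hcard' : D.card = gammaID G := hcard
  have hinj : Fintype.card V ≤ (ntraces (closedNH G) D).card := by
    rw [← card_univ]
    apply card_le_card_of_injOn (fun x => (insert x (G.neighborFinset x)) ∩ D)
    · intro x _
      simp only [mem_coe, ntraces, mem_erase, hrestrict, mem_image]
      refine ⟨nonempty_iff_ne_empty.mp (hD.1 x),
        insert x (G.neighborFinset x), ?_, rfl⟩
      exact mem_image_of_mem _ (mem_univ x)
    · intro x _ y _ h
      by_contra hxy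
      exact hD.2 x y hxy h
  have h5 : (ntraces (closedNH G) D).card ≤ traceFn (closedNH G) (gammaID G) := by
    unfold traceFn
    apply Finset.le_sup (f := fun S => (ntraces (closedNH G) S).card)
    simp only [mem_filter, mem_powerset]
    exact ⟨subset_univ _, hcard'⟩
  have h6 := traceFn_le_add (closedNH G) j (gammaID G - j)
  rw [Nat.add_sub_cancel' hj] at h6
  calc Fintype.card V
      ≤ traceFn (closedNH G) (gammaID G) := le_trans hinj h5
    _ ≤ traceFn (closedNH G) j + rdegen (closedNH G) * (gammaID G - j) := h6
    _ = rdegen (closedNH G) * (gammaID G - j) + traceFn (closedNH G) j := by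
        ring
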